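/- For every x ∈ (−1,1), the Cauchy principal value (1/π)·lim_{ρ→0⁺} ∫_{{y ∈ (−1,1) : |y−x| > ρ}} 1/(√(1−y²)·(y−x)) dy equals 0, and for every integer n ≥ 1, the Cauchy principal value (1/π)·lim_{ρ→0⁺} ∫_{{y ∈ (−1,1) : |y−x| > ρ}} T_n(y)/(√(1−y²)·(y−x)) dy equals U_{n−1}(x). -/

import Mathlib

open MeasureTheory Filter Set Polynomial

namespace HTaux

/-- integrability of the Chebyshev weight -/
lemma w_integrableOn : IntegrableOn (fun y : ℝ => 1 / Real.sqrt (1 - y ^ 2)) (Ioo (-1) 1) := by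
  have h := intervalIntegral.integrableOn_deriv_of_nonneg (g := Real.arcsin)
    (g' := fun y : ℝ => 1 / Real.sqrt (1 - y ^ 2)) (a := -1) (b := 1)
    (Real.continuous_arcsin.continuousOn)
    (fun y hy => Real.hasDerivAt_arcsin (ne_of_gt hy.1) (ne_of_lt hy.2))
    (fun y _ => by positivity)
  exact h.mono_set Ioo_subset_Ioc_self

lemma w_intervalIntegrable : IntervalIntegrable (fun y : ℝ => 1 / Real.sqrt (1 - y ^ 2))
    volume (-1) 1 := by
  rw [intervalIntegrable_iff_integrableOn_Ioo_of_le (by norm_num)]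
  exact w_integrableOn

lemma w_integral : ∫ y in Ioo (-1 : ℝ) 1, 1 / Real.sqrt (1 - y ^ 2) = Real.pi := by
  have h := intervalIntegral.integral_eq_sub_of_hasDeriv_right_of_le (a := -1) (b := 1)
    (f := Real.arcsin) (f' := fun y : ℝ => 1 / Real.sqrt (1 - y ^ 2)) (by norm_num)
    (Real.continuous_arcsin.continuousOn)
    (fun y hy => (Real.hasDerivAt_arcsin (ne_of_gt hy.1) (ne_of_lt hy.2)).hasDerivWithinAt)
    w_intervalIntegrable
  rw [intervalIntegral.integral_of_le (by norm_num : (-1:ℝ) ≤ 1),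
    MeasureTheory.integral_Ioc_eq_integral_Ioo] at h
  rw [h, Real.arcsin_one, Real.arcsin_neg_one]; ring

/-- polynomials divided by the weight are integrable -/
lemma poly_w_integrable (p : Polynomial ℝ) :
    IntegrableOn (fun y : ℝ => p.eval y / Real.sqrt (1 - y ^ 2)) (Ioo (-1) 1) := by
  obtain ⟨M, hM⟩ := (isCompact_Icc (a := (-1:ℝ)) (b := 1)).exists_bound_of_continuousOn
    (p.continuous_aeval.continuousOn)
  refine Integrable.mono' (g := fun y : ℝ => M * (1 / Real.sqrt (1 - y ^ 2)))
    (w_integrableOn.const_mul M) ?_ ?_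
  · refine (ContinuousOn.aestronglyMeasurable ?_ measurableSet_Ioo)
    refine ContinuousOn.div (p.continuous_aeval.continuousOn) ?_ ?_
    · exact (Real.continuous_sqrt.comp (by continuity)).continuousOn
    · intro y hy
      have : (0:ℝ) < 1 - y ^ 2 := by nlinarith [hy.1, hy.2]
      positivity
  · refine (ae_restrict_iff' measurableSet_Ioo).2 (ae_of_all _ fun y hy => ?_)
    have h1 : (0:ℝ) < 1 - y ^ 2 := by nlinarith [hy.1, hy.2]
    have h2 : 0 < Real.sqrt (1 - y ^ 2) := Real.sqrt_pos.2 h1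
    have h3 : ‖p.eval y‖ ≤ M := by
      simpa using hM y ⟨hy.1.le, hy.2.le⟩
    rw [Real.norm_eq_abs, abs_div, abs_of_pos h2, div_eq_mul_one_div]
    have h4 : (0:ℝ) ≤ 1 / Real.sqrt (1 - y ^ 2) := by positivity
    rw [Real.norm_eq_abs] at h3
    exact mul_le_mul_of_nonneg_right h3 h4


lemma sqrt_hasDerivAt {y : ℝ} (hy : y ∈ Ioo (-1:ℝ) 1) :
    HasDerivAt (fun y : ℝ => Real.sqrt (1 - y ^ 2)) (-y / Real.sqrt (1 - y ^ 2)) y := by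
  have h0 : (0:ℝ) < 1 - y ^ 2 := by nlinarith [hy.1, hy.2]
  have h1 : HasDerivAt (fun y : ℝ => 1 - y ^ 2) (-(2 * y)) y := by
    simpa using ((hasDerivAt_pow 2 y).const_sub 1)
  have h2 := h1.sqrt (ne_of_gt h0)
  convert h2 using 1
  have : Real.sqrt (1 - y^2) ≠ 0 := by positivity
  field_simp

lemma chebyshevT_w_integral {m : ℤ} (hm : 1 ≤ m) :
    ∫ y in Ioo (-1:ℝ) 1, (Chebyshev.T ℝ m).eval y / Real.sqrt (1 - y ^ 2) = 0 := by
  have hm0 : (m:ℝ) ≠ 0 := by exact_mod_cast (by omega : m ≠ 0)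
  set G : ℝ → ℝ := fun y => (-1 / (m:ℝ)) *
    (Real.sqrt (1 - y ^ 2) * (Chebyshev.U ℝ (m-1)).eval y) with hG
  have hcont : ContinuousOn G (Icc (-1:ℝ) 1) := by
    apply Continuous.continuousOn
    exact continuous_const.mul ((Real.continuous_sqrt.comp (by continuity)).mul
      (Chebyshev.U ℝ (m-1)).continuous_aeval)
  have hderiv : ∀ y ∈ Ioo (-1:ℝ) 1,
      HasDerivAt G ((Chebyshev.T ℝ m).eval y / Real.sqrt (1 - y ^ 2)) y := by
    intro y hy
    have h0 : (0:ℝ) < 1 - y ^ 2 := by nlinarith [hy.1, hy.2]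
    have hw : (0:ℝ) < Real.sqrt (1 - y ^ 2) := Real.sqrt_pos.2 h0
    have hw2 : Real.sqrt (1 - y ^ 2) ^ 2 = 1 - y ^ 2 := Real.sq_sqrt h0.le
    have hp : HasDerivAt (fun y : ℝ => (Chebyshev.U ℝ (m-1)).eval y)
        ((derivative (Chebyshev.U ℝ (m-1))).eval y) y := Polynomial.hasDerivAt _ y
    have hd := (((sqrt_hasDerivAt hy).mul hp).const_mul (-1 / (m:ℝ)))
    refine hd.congr_deriv ?_; symm
    have hkey := congrArg (Polynomial.eval y) (Chebyshev.add_one_mul_T_eq_poly_in_U (R := ℝ) (m-1))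
    simp only [Polynomial.eval_mul, Polynomial.eval_add, Polynomial.eval_sub,
      Polynomial.eval_one, Polynomial.eval_X, Polynomial.eval_pow, Polynomial.eval_intCast,
      Int.cast_sub, Int.cast_one, sub_add_cancel] at hkey
    set u := (Chebyshev.U ℝ (m-1)).eval y
    set du := (derivative (Chebyshev.U ℝ (m-1))).eval y
    set t := (Chebyshev.T ℝ m).eval y
    set w := Real.sqrt (1 - y ^ 2)
    field_simp
    -- hkey : (m - 1 + 1) * t = y * u - (1 - y^2) * du
    linear_combination hkey + du * hw2
  have hint : IntervalIntegrable (fun y : ℝ => (Chebyshev.T ℝ m).eval y / Real.sqrt (1 - y ^ 2))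
      volume (-1) 1 := by
    rw [intervalIntegrable_iff_integrableOn_Ioo_of_le (by norm_num)]
    exact poly_w_integrable _
  have h := intervalIntegral.integral_eq_sub_of_hasDeriv_right_of_le (by norm_num : (-1:ℝ) ≤ 1)
    hcont (fun y hy => (hderiv y hy).hasDerivWithinAt) hint
  rw [intervalIntegral.integral_of_le (by norm_num : (-1:ℝ) ≤ 1),
    MeasureTheory.integral_Ioc_eq_integral_Ioo] at h
  rw [h, hG]
  norm_num



noncomputable def D (x : ℝ) (n : ℕ) : Polynomial ℝ :=
  C ((Chebyshev.U ℝ n).eval x) +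
    2 * ∑ k ∈ Finset.range n, C ((Chebyshev.U ℝ k).eval x) * Chebyshev.T ℝ ((n : ℤ) - k)

lemma D_eval (x y : ℝ) (n : ℕ) :
    (D x n).eval y = (Chebyshev.U ℝ n).eval x +
      2 * ∑ k ∈ Finset.range n,
        (Chebyshev.U ℝ k).eval x * (Chebyshev.T ℝ ((n : ℤ) - k)).eval y := by
  simp [D, eval_finset_sum]

lemma twoXT_eval (y : ℝ) (j : ℤ) :
    2 * y * (Chebyshev.T ℝ j).eval y
      = (Chebyshev.T ℝ (j+1)).eval y + (Chebyshev.T ℝ (j-1)).eval y := by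
  have h := congrArg (Polynomial.eval y) (Chebyshev.T_mul_T ℝ 1 j)
  simp only [Polynomial.eval_mul, Polynomial.eval_add, Polynomial.eval_ofNat,
    Chebyshev.T_one, Polynomial.eval_X] at h
  have h2 : Chebyshev.T ℝ (1 - j) = Chebyshev.T ℝ (j - 1) := by
    rw [show (1:ℤ) - j = -(j - 1) by ring, Chebyshev.T_neg]
  rw [h2, add_comm 1 j] at h
  linear_combination h

lemma T_rec_eval (y : ℝ) (j : ℤ) :
    (Chebyshev.T ℝ (j+2)).eval y
      = 2 * y * (Chebyshev.T ℝ (j+1)).eval y - (Chebyshev.T ℝ j).eval y := by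
  have h := congrArg (Polynomial.eval y) (Chebyshev.T_add_two ℝ j)
  simpa using h

lemma d_rec (x y : ℝ) (n : ℕ) :
    (D x (n+2)).eval y = 2 * y * (D x (n+1)).eval y - (D x n).eval y
      + 2 * (Chebyshev.T ℝ ((n:ℤ)+2)).eval x := by
  have hu : (Chebyshev.U ℝ ((n:ℤ)+2)).eval x - (Chebyshev.U ℝ (n:ℤ)).eval x
      = 2 * (Chebyshev.T ℝ ((n:ℤ)+2)).eval x := by
    have h1 := congrArg (Polynomial.eval x) (Chebyshev.U_add_two ℝ (n:ℤ))
    have h2 := congrArg (Polynomial.eval x) (Chebyshev.T_eq_U_sub_X_mul_U ℝ ((n:ℤ)+2))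
    simp only [Polynomial.eval_mul, Polynomial.eval_add, Polynomial.eval_sub,
      Polynomial.eval_ofNat, Polynomial.eval_X, add_sub_cancel_right] at h1 h2
    rw [show (n:ℤ)+2-1 = (n:ℤ)+1 by ring] at h2
    linear_combination -h1 - 2 * h2
  have hA : 2 * y * (∑ k ∈ Finset.range (n+1),
        (Chebyshev.U ℝ k).eval x * (Chebyshev.T ℝ ((n:ℤ)+1-k)).eval y)
      = (∑ k ∈ Finset.range (n+1),
          (Chebyshev.U ℝ k).eval x * (Chebyshev.T ℝ ((n:ℤ)+2-k)).eval y)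
        + (∑ k ∈ Finset.range (n+1),
          (Chebyshev.U ℝ k).eval x * (Chebyshev.T ℝ ((n:ℤ)-k)).eval y) := by
    rw [Finset.mul_sum, ← Finset.sum_add_distrib]
    refine Finset.sum_congr rfl fun k _ => ?_
    have h := twoXT_eval y ((n:ℤ)+1-k)
    rw [show (n:ℤ)+1-k+1 = (n:ℤ)+2-k by ring, show (n:ℤ)+1-k-1 = (n:ℤ)-k by ring] at h
    linear_combination ((Chebyshev.U ℝ k).eval x) * h
  have hB : ∑ k ∈ Finset.range (n+2),
        (Chebyshev.U ℝ k).eval x * (Chebyshev.T ℝ ((n:ℤ)+2-k)).eval y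
      = (∑ k ∈ Finset.range (n+1),
          (Chebyshev.U ℝ k).eval x * (Chebyshev.T ℝ ((n:ℤ)+2-k)).eval y)
        + (Chebyshev.U ℝ ((n:ℤ)+1)).eval x * y := by
    rw [Finset.sum_range_succ]
    congr 1
    push_cast
    rw [show (n:ℤ)+2-((n:ℤ)+1) = 1 by ring, Chebyshev.T_one]
    simp
  have hC : ∑ k ∈ Finset.range (n+1),
        (Chebyshev.U ℝ k).eval x * (Chebyshev.T ℝ ((n:ℤ)-k)).eval y
      = (∑ k ∈ Finset.range n,
          (Chebyshev.U ℝ k).eval x * (Chebyshev.T ℝ ((n:ℤ)-k)).eval y)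
        + (Chebyshev.U ℝ (n:ℤ)).eval x := by
    rw [Finset.sum_range_succ]
    congr 1
    rw [show (n:ℤ)-(n:ℤ) = 0 by ring, Chebyshev.T_zero]
    simp
  rw [D_eval, D_eval, D_eval]
  push_cast
  linear_combination hu + 2 * hB - 2 * hA - 2 * hC

lemma d_key (x : ℝ) : ∀ (n : ℕ) (y : ℝ),
    (y - x) * (D x n).eval y
      = (Chebyshev.T ℝ ((n:ℤ)+1)).eval y - (Chebyshev.T ℝ ((n:ℤ)+1)).eval x := by
  intro n
  induction n using Nat.twoStepInduction with
  | zero =>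
    intro y
    norm_num [D_eval, Chebyshev.U_zero, Chebyshev.T_one]
  | one =>
    intro y
    have h : ((1:ℕ):ℤ) = 1 := by norm_num
    simp only [D_eval, h, Finset.sum_range_one, Chebyshev.U_one, Chebyshev.U_zero]
    norm_num [Chebyshev.T_one, Chebyshev.T_two]
    ring
  | more n ih2 ih1 =>
    intro y
    have hr := d_rec x y n
    have hy := T_rec_eval y ((n:ℤ)+1)
    have hx := T_rec_eval x ((n:ℤ)+1)
    have i1 := ih1 y
    have i2 := ih2 y
    push_cast at hr i1 i2 ⊢
    rw [show (n:ℤ)+1+2 = (n:ℤ)+2+1 by ring] at hy hx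
    rw [show ((n:ℤ)+2) = ((n:ℤ)+1+1) by ring] at hr
    linear_combination (y - x) * hr + 2 * y * i1 - i2 - hy + hx


lemma D_w_integrableOn (x : ℝ) (n : ℕ) :
    IntegrableOn (fun y : ℝ => (D x n).eval y / Real.sqrt (1 - y ^ 2)) (Ioo (-1) 1) :=
  poly_w_integrable _

lemma D_integral (x : ℝ) (n : ℕ) :
    ∫ y in Ioo (-1:ℝ) 1, (D x n).eval y / Real.sqrt (1 - y ^ 2)
      = Real.pi * (Chebyshev.U ℝ n).eval x := by
  have hfun : (fun y : ℝ => (D x n).eval y / Real.sqrt (1 - y ^ 2))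
      = fun y : ℝ => (Chebyshev.U ℝ n).eval x * (1 / Real.sqrt (1 - y ^ 2))
        + ∑ k ∈ Finset.range n, (2 * (Chebyshev.U ℝ k).eval x)
            * ((Chebyshev.T ℝ ((n:ℤ) - k)).eval y / Real.sqrt (1 - y ^ 2)) := by
    funext y
    rw [D_eval, add_div, Finset.mul_sum, Finset.sum_div]
    congr 1
    · ring
    · refine Finset.sum_congr rfl fun k _ => ?_
      ring
  rw [hfun]
  have h1 : IntegrableOn (fun y : ℝ => (Chebyshev.U ℝ n).eval x * (1 / Real.sqrt (1 - y ^ 2)))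
      (Ioo (-1:ℝ) 1) := w_integrableOn.const_mul _
  have h2 : ∀ k ∈ Finset.range n, IntegrableOn
      (fun y : ℝ => (2 * (Chebyshev.U ℝ k).eval x)
        * ((Chebyshev.T ℝ ((n:ℤ) - k)).eval y / Real.sqrt (1 - y ^ 2))) (Ioo (-1:ℝ) 1) :=
    fun k _ => (poly_w_integrable _).const_mul _
  rw [MeasureTheory.integral_add h1 (integrable_finset_sum _ h2),
    MeasureTheory.integral_finset_sum _ h2, MeasureTheory.integral_const_mul, w_integral]
  have hz : ∀ k ∈ Finset.range n,
      (∫ y in Ioo (-1:ℝ) 1, (2 * (Chebyshev.U ℝ k).eval x)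
        * ((Chebyshev.T ℝ ((n:ℤ) - k)).eval y / Real.sqrt (1 - y ^ 2))) = 0 := by
    intro k hk
    have hk' : (1:ℤ) ≤ (n:ℤ) - k := by
      have := Finset.mem_range.1 hk
      omega
    rw [MeasureTheory.integral_const_mul, chebyshevT_w_integral hk']
    ring
  rw [Finset.sum_congr rfl hz]
  simp [mul_comm]


section Main

variable {x : ℝ} (hx : x ∈ Ioo (-1:ℝ) 1)

/-- the auxiliary function in the antiderivative -/
noncomputable def gaux (x y : ℝ) : ℝ :=
  1 - x * y + Real.sqrt (1 - x ^ 2) * Real.sqrt (1 - y ^ 2)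

/-- antiderivative of `1/(√(1-y²)(y-x))` -/
noncomputable def Faux (x y : ℝ) : ℝ :=
  (1 / Real.sqrt (1 - x ^ 2)) * (Real.log (y - x) - Real.log (gaux x y))

include hx

lemma s_pos : 0 < Real.sqrt (1 - x ^ 2) := by
  have : (0:ℝ) < 1 - x ^ 2 := by nlinarith [hx.1, hx.2]
  positivity

lemma gaux_pos {y : ℝ} (hy : y ∈ Icc (-1:ℝ) 1) : 0 < gaux x y := by
  have h1 : |x * y| ≤ |x| := by
    rw [abs_mul]
    exact mul_le_of_le_one_right (abs_nonneg x) (abs_le.2 ⟨hy.1, hy.2⟩)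
  have h2 : |x| < 1 := abs_lt.2 ⟨hx.1, hx.2⟩
  have h3 : (0:ℝ) < 1 - x * y := by
    have := neg_abs_le (x * y)
    linarith [abs_le.1 h1]
  have h4 : 0 ≤ Real.sqrt (1 - x ^ 2) * Real.sqrt (1 - y ^ 2) :=
    mul_nonneg (Real.sqrt_nonneg _) (Real.sqrt_nonneg _)
  unfold gaux; linarith

lemma gaux_cont : Continuous (gaux x) := by
  unfold gaux
  have : Continuous fun y : ℝ => Real.sqrt (1 - y ^ 2) :=
    Real.continuous_sqrt.comp (by continuity)
  continuity

lemma Faux_hasDerivAt {y : ℝ} (hy : y ∈ Ioo (-1:ℝ) 1) (hne : y ≠ x) :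
    HasDerivAt (Faux x) (1 / (Real.sqrt (1 - y ^ 2) * (y - x))) y := by
  have h0 : (0:ℝ) < 1 - y ^ 2 := by nlinarith [hy.1, hy.2]
  have hw : 0 < Real.sqrt (1 - y ^ 2) := Real.sqrt_pos.2 h0
  have hs := s_pos hx
  have hg := gaux_pos hx (Ioo_subset_Icc_self hy)
  have hsub : y - x ≠ 0 := sub_ne_zero.2 hne
  have hlog1 : HasDerivAt (fun y : ℝ => Real.log (y - x)) (1 / (y - x)) y := by
    have := ((hasDerivAt_id y).sub_const x).log hsub
    simpa using this
  have hgd : HasDerivAt (gaux x)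
      (-x + Real.sqrt (1 - x ^ 2) * (-y / Real.sqrt (1 - y ^ 2))) y := by
    unfold gaux
    have h1 : HasDerivAt (fun y : ℝ => 1 - x * y) (-x) y := by
      simpa using ((hasDerivAt_id y).const_mul x).const_sub 1
    exact h1.add ((sqrt_hasDerivAt hy).const_mul _)
  have hlog2 := hgd.log (ne_of_gt hg)
  have hd := (hlog1.sub hlog2).const_mul (1 / Real.sqrt (1 - x ^ 2))
  refine hd.congr_deriv ?_; symm
  have hw2 : Real.sqrt (1 - y ^ 2) ^ 2 = 1 - y ^ 2 := Real.sq_sqrt h0.le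
  have hs2 : Real.sqrt (1 - x ^ 2) ^ 2 = 1 - x ^ 2 := Real.sq_sqrt (by nlinarith [hx.1, hx.2])
  set w := Real.sqrt (1 - y ^ 2)
  set s := Real.sqrt (1 - x ^ 2)
  have hgg : gaux x y = 1 - x * y + s * w := rfl
  rw [hgg]
  have hgne : 1 - x * y + s * w ≠ 0 := by rw [← hgg]; exact ne_of_gt hg
  have hgne' : 1 - y * x + w * s ≠ 0 := by
    rw [show 1 - y * x + w * s = 1 - x * y + s * w by ring]; exact hgne
  field_simp
  linear_combination (-s) * hw2 + w * hs2

lemma Faux_contOn {a b : ℝ} (h1 : -1 ≤ a) (h2 : b ≤ 1) (hxout : ∀ y ∈ Icc a b, y ≠ x) :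
    ContinuousOn (Faux x) (Icc a b) := by
  unfold Faux
  apply ContinuousOn.mul continuousOn_const
  apply ContinuousOn.sub
  · apply ContinuousOn.log
    · exact (continuous_id.sub continuous_const).continuousOn
    · exact fun y hy => sub_ne_zero.2 (hxout y hy)
  · apply ContinuousOn.log (gaux_cont hx).continuousOn
    intro y hy
    exact ne_of_gt (gaux_pos hx ⟨le_trans h1 hy.1, le_trans hy.2 h2⟩)

lemma gfun_integrableOn_piece {a b ρ : ℝ} (hρ : 0 < ρ) (h1 : -1 ≤ a) (h2 : b ≤ 1)
    (hd : ∀ y ∈ Ioo a b, ρ ≤ |y - x|) :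
    IntegrableOn (fun y : ℝ => 1 / (Real.sqrt (1 - y ^ 2) * (y - x))) (Ioo a b) := by
  have hsub : Ioo a b ⊆ Ioo (-1:ℝ) 1 := Ioo_subset_Ioo h1 h2
  refine Integrable.mono' (g := fun y : ℝ => (1/ρ) * (1 / Real.sqrt (1 - y ^ 2)))
    ((w_integrableOn.mono_set hsub).const_mul _) ?_ ?_
  · apply ContinuousOn.aestronglyMeasurable ?_ measurableSet_Ioo
    apply ContinuousOn.div continuousOn_const
    · apply ContinuousOn.mul
      · exact (Real.continuous_sqrt.comp (by continuity)).continuousOn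
      · exact (continuous_id.sub continuous_const).continuousOn
    · intro y hy
      have h0 : (0:ℝ) < 1 - y ^ 2 := by
        have := hsub hy; nlinarith [this.1, this.2]
      have hyx : y - x ≠ 0 := by
        have := hd y hy
        intro hcon
        rw [hcon] at this
        simp at this
        linarith
      exact mul_ne_zero (by positivity) hyx
  · refine (ae_restrict_iff' measurableSet_Ioo).2 (ae_of_all _ fun y hy => ?_)
    have h0 : (0:ℝ) < 1 - y ^ 2 := by
      have := hsub hy; nlinarith [this.1, this.2]
    have hw : 0 < Real.sqrt (1 - y ^ 2) := Real.sqrt_pos.2 h0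
    have hdy := hd y hy
    have hyx : 0 < |y - x| := lt_of_lt_of_le hρ hdy
    rw [Real.norm_eq_abs, abs_div, abs_mul, abs_of_pos hw, abs_one]
    rw [div_le_iff₀ (by positivity)]
    have : (1:ℝ) / ρ * (1 / Real.sqrt (1 - y ^ 2)) * (Real.sqrt (1 - y ^ 2) * |y - x|)
        = |y - x| / ρ := by field_simp
    rw [this, le_div_iff₀ hρ, one_mul]
    exact hdy

lemma piece_integral {a b ρ : ℝ} (hab : a ≤ b) (hρ : 0 < ρ) (h1 : -1 ≤ a) (h2 : b ≤ 1)
    (hd : ∀ y ∈ Icc a b, ρ ≤ |y - x|) :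
    ∫ y in Ioo a b, 1 / (Real.sqrt (1 - y ^ 2) * (y - x)) = Faux x b - Faux x a := by
  have hint : IntervalIntegrable (fun y : ℝ => 1 / (Real.sqrt (1 - y ^ 2) * (y - x)))
      volume a b := by
    rw [intervalIntegrable_iff_integrableOn_Ioo_of_le hab]
    exact gfun_integrableOn_piece hx hρ h1 h2 (fun y hy => hd y (Ioo_subset_Icc_self hy))
  have hxout : ∀ y ∈ Icc a b, y ≠ x := by
    intro y hy hcon
    have := hd y hy
    rw [hcon] at this
    simp at this
    linarith
  have h := intervalIntegral.integral_eq_sub_of_hasDeriv_right_of_le hab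
    (Faux_contOn hx h1 h2 hxout) (fun y hy => (Faux_hasDerivAt hx
      (Ioo_subset_Ioo h1 h2 hy) (hxout y (Ioo_subset_Icc_self hy))).hasDerivWithinAt) hint
  rw [intervalIntegral.integral_of_le hab, MeasureTheory.integral_Ioc_eq_integral_Ioo] at h
  exact h

omit hx in
lemma Faux_one : Faux x 1 = 0 := by
  unfold Faux gaux
  norm_num

omit hx in
lemma Faux_neg_one : Faux x (-1) = 0 := by
  unfold Faux gaux
  rw [show (-1:ℝ) - x = -(1 + x) by ring, Real.log_neg_eq_log]
  norm_num [mul_comm]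

omit hx in
lemma Eset_eq {ρ : ℝ} (hρ1 : 0 < ρ) (hρ2 : ρ < 1 - x) (hρ3 : ρ < x + 1) :
    {y : ℝ | y ∈ Ioo (-1:ℝ) 1 ∧ ρ < |y - x|} = Ioo (-1) (x - ρ) ∪ Ioo (x + ρ) 1 := by
  ext y
  simp only [mem_setOf_eq, mem_Ioo, mem_union]
  constructor
  · rintro ⟨⟨hy1, hy2⟩, hy3⟩
    rcases lt_abs.1 hy3 with h | h
    · right; exact ⟨by linarith, hy2⟩
    · left; exact ⟨hy1, by linarith⟩
  · rintro (⟨hy1, hy2⟩ | ⟨hy1, hy2⟩)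
    · exact ⟨⟨hy1, by linarith⟩, lt_abs.2 (Or.inr (by linarith))⟩
    · exact ⟨⟨by linarith, hy2⟩, lt_abs.2 (Or.inl (by linarith))⟩

lemma truncated_integral {ρ : ℝ} (hρ1 : 0 < ρ) (hρ2 : ρ < 1 - x) (hρ3 : ρ < x + 1) :
    ∫ y in {y : ℝ | y ∈ Ioo (-1:ℝ) 1 ∧ ρ < |y - x|}, 1 / (Real.sqrt (1 - y ^ 2) * (y - x))
      = (1 / Real.sqrt (1 - x ^ 2))
          * (Real.log (gaux x (x + ρ)) - Real.log (gaux x (x - ρ))) := by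
  rw [Eset_eq hρ1 hρ2 hρ3]
  have hd1 : ∀ y ∈ Icc (-1:ℝ) (x - ρ), ρ ≤ |y - x| := by
    intro y hy
    exact le_abs.2 (Or.inr (by simp only [neg_sub]; linarith [hy.2]))
  have hd2 : ∀ y ∈ Icc (x + ρ) (1:ℝ), ρ ≤ |y - x| := by
    intro y hy
    exact le_abs.2 (Or.inl (by linarith [hy.1]))
  have hi1 : IntegrableOn (fun y : ℝ => 1 / (Real.sqrt (1 - y ^ 2) * (y - x)))
      (Ioo (-1) (x - ρ)) := gfun_integrableOn_piece hx hρ1 le_rfl (by linarith)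
      (fun y hy => hd1 y (Ioo_subset_Icc_self hy))
  have hi2 : IntegrableOn (fun y : ℝ => 1 / (Real.sqrt (1 - y ^ 2) * (y - x)))
      (Ioo (x + ρ) 1) := gfun_integrableOn_piece hx hρ1 (by linarith) le_rfl
      (fun y hy => hd2 y (Ioo_subset_Icc_self hy))
  have hdisj : Disjoint (Ioo (-1:ℝ) (x - ρ)) (Ioo (x + ρ) 1) := by
    refine Set.disjoint_left.2 fun y hy1 hy2 => ?_
    have := hy1.2; have := hy2.1; linarith
  rw [MeasureTheory.setIntegral_union hdisj measurableSet_Ioo hi1 hi2]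
  rw [piece_integral hx (by linarith) hρ1 le_rfl (by linarith) hd1,
    piece_integral hx (by linarith) hρ1 (by linarith) le_rfl hd2,
    Faux_one, Faux_neg_one]
  unfold Faux
  rw [show x - ρ - x = -ρ by ring, show x + ρ - x = ρ by ring, Real.log_neg_eq_log]
  ring

lemma statement0_raw :
    Tendsto (fun ρ : ℝ => ∫ y in {y : ℝ | y ∈ Ioo (-1:ℝ) 1 ∧ ρ < |y - x|},
        1 / (Real.sqrt (1 - y ^ 2) * (y - x)))
      (nhdsWithin 0 (Ioi 0)) (nhds 0) := by
  have hδ : (0:ℝ) < min (1 - x) (x + 1) := lt_min (by linarith [hx.2]) (by linarith [hx.1])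
  have hgx : 0 < gaux x x := gaux_pos hx ⟨hx.1.le, hx.2.le⟩
  have hcont : ContinuousAt (fun t : ℝ => Real.log (gaux x t)) x :=
    (Real.continuousAt_log (ne_of_gt hgx)).comp (gaux_cont hx).continuousAt
  have htplus : Tendsto (fun ρ : ℝ => x + ρ) (nhdsWithin 0 (Ioi 0)) (nhds x) := by
    have hc : Continuous (fun ρ : ℝ => x + ρ) := continuous_const.add continuous_id
    have := (hc.tendsto (0:ℝ)).mono_left (nhdsWithin_le_nhds (s := Ioi (0:ℝ)))
    simpa using this
  have htminus : Tendsto (fun ρ : ℝ => x - ρ) (nhdsWithin 0 (Ioi 0)) (nhds x) := by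
    have hc : Continuous (fun ρ : ℝ => x - ρ) := continuous_const.sub continuous_id
    have := (hc.tendsto (0:ℝ)).mono_left (nhdsWithin_le_nhds (s := Ioi (0:ℝ)))
    simpa using this
  have hT : Tendsto (fun ρ : ℝ => (1 / Real.sqrt (1 - x ^ 2))
      * (Real.log (gaux x (x + ρ)) - Real.log (gaux x (x - ρ))))
      (nhdsWithin 0 (Ioi 0)) (nhds 0) := by
    have := ((hcont.tendsto.comp htplus).sub (hcont.tendsto.comp htminus)).const_mul
      (1 / Real.sqrt (1 - x ^ 2))
    simpa using this
  refine hT.congr' ?_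
  filter_upwards [Ioo_mem_nhdsGT_of_mem ⟨le_refl (0:ℝ), hδ⟩] with ρ hρ
  exact (truncated_integral hx hρ.1 (lt_of_lt_of_le hρ.2 (min_le_left _ _))
    (lt_of_lt_of_le hρ.2 (min_le_right _ _))).symm

omit hx in
lemma Eset_measurable (ρ : ℝ) :
    MeasurableSet {y : ℝ | y ∈ Ioo (-1:ℝ) 1 ∧ ρ < |y - x|} := by
  have : {y : ℝ | y ∈ Ioo (-1:ℝ) 1 ∧ ρ < |y - x|}
      = Ioo (-1) 1 ∩ {y : ℝ | ρ < |y - x|} := by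
    ext y; simp [mem_setOf_eq, mem_inter_iff]
  rw [this]
  exact measurableSet_Ioo.inter
    ((isOpen_lt continuous_const ((continuous_id.sub continuous_const).abs)).measurableSet)

lemma gfun_integrableOn_E {ρ : ℝ} (hρ : 0 < ρ) :
    IntegrableOn (fun y : ℝ => 1 / (Real.sqrt (1 - y ^ 2) * (y - x)))
      {y : ℝ | y ∈ Ioo (-1:ℝ) 1 ∧ ρ < |y - x|} := by
  refine Integrable.mono' (g := fun y : ℝ => (1/ρ) * (1 / Real.sqrt (1 - y ^ 2)))
    ((w_integrableOn.mono_set (fun y hy => hy.1)).const_mul _) ?_ ?_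
  · apply ContinuousOn.aestronglyMeasurable ?_ (Eset_measurable ρ)
    apply ContinuousOn.div continuousOn_const
    · apply ContinuousOn.mul
      · exact (Real.continuous_sqrt.comp (by continuity)).continuousOn
      · exact (continuous_id.sub continuous_const).continuousOn
    · intro y hy
      have h0 : (0:ℝ) < 1 - y ^ 2 := by nlinarith [hy.1.1, hy.1.2]
      have hyx : y - x ≠ 0 := by
        intro hcon
        have := hy.2
        rw [hcon] at this
        simp at this
        linarith
      exact mul_ne_zero (by positivity) hyx
  · refine (ae_restrict_iff' (Eset_measurable ρ)).2 (ae_of_all _ fun y hy => ?_)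
    have h0 : (0:ℝ) < 1 - y ^ 2 := by nlinarith [hy.1.1, hy.1.2]
    have hw : 0 < Real.sqrt (1 - y ^ 2) := Real.sqrt_pos.2 h0
    have hdy : ρ ≤ |y - x| := hy.2.le
    have hyx : 0 < |y - x| := lt_of_lt_of_le hρ hdy
    rw [Real.norm_eq_abs, abs_div, abs_mul, abs_of_pos hw, abs_one]
    rw [div_le_iff₀ (by positivity)]
    have : (1:ℝ) / ρ * (1 / Real.sqrt (1 - y ^ 2)) * (Real.sqrt (1 - y ^ 2) * |y - x|)
        = |y - x| / ρ := by field_simp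
    rw [this, le_div_iff₀ hρ, one_mul]
    exact hdy

omit hx in
lemma h_part_tendsto (m : ℕ) :
    Tendsto (fun ρ : ℝ => ∫ y in {y : ℝ | y ∈ Ioo (-1:ℝ) 1 ∧ ρ < |y - x|},
        (D x m).eval y / Real.sqrt (1 - y ^ 2))
      (nhdsWithin 0 (Ioi 0)) (nhds (Real.pi * (Chebyshev.U ℝ m).eval x)) := by
  set h : ℝ → ℝ := fun y => (D x m).eval y / Real.sqrt (1 - y ^ 2) with hh
  have hmeasfun : AEStronglyMeasurable h volume := by
    apply Measurable.aestronglyMeasurable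
    exact ((D x m).continuous_aeval.measurable).div
      ((Real.continuous_sqrt.comp (by continuity)).measurable)
  have hae : ∀ᵐ (y : ℝ), y ≠ x := by
    rw [MeasureTheory.ae_iff]
    simp only [not_not, Set.setOf_eq_eq_singleton]
    exact Real.volume_singleton
  have hDCT := MeasureTheory.tendsto_integral_filter_of_dominated_convergence
    (μ := volume) (l := nhdsWithin (0:ℝ) (Ioi 0))
    (F := fun ρ : ℝ => ({y : ℝ | y ∈ Ioo (-1:ℝ) 1 ∧ ρ < |y - x|}).indicator h)
    (f := (Ioo (-1:ℝ) 1).indicator h)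
    ((Ioo (-1:ℝ) 1).indicator (fun y => ‖h y‖))
    (Eventually.of_forall fun ρ => hmeasfun.indicator (Eset_measurable ρ))
    (by
      refine Eventually.of_forall fun ρ => ae_of_all _ fun y => ?_
      by_cases hy : y ∈ {y : ℝ | y ∈ Ioo (-1:ℝ) 1 ∧ ρ < |y - x|}
      · rw [indicator_of_mem hy, indicator_of_mem hy.1]
      · rw [indicator_of_notMem hy, norm_zero]
        exact indicator_nonneg (fun y _ => norm_nonneg _) y)
    (MeasureTheory.IntegrableOn.integrable_indicator ((D_w_integrableOn x m).norm) measurableSet_Ioo)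
    (by
      filter_upwards [hae] with y hy
      by_cases hyI : y ∈ Ioo (-1:ℝ) 1
      · rw [indicator_of_mem hyI]
        have habs : 0 < |y - x| := abs_pos.2 (sub_ne_zero.2 hy)
        refine tendsto_const_nhds.congr' ?_
        filter_upwards [Ioo_mem_nhdsGT_of_mem (Set.mem_Ico.2 ⟨le_refl (0:ℝ), habs⟩)] with ρ hρ
        exact (indicator_of_mem
          (show y ∈ {y : ℝ | y ∈ Ioo (-1:ℝ) 1 ∧ ρ < |y - x|} from ⟨hyI, hρ.2⟩) h).symm
      · rw [indicator_of_notMem hyI]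
        refine tendsto_const_nhds.congr (fun ρ => ?_)
        exact (indicator_of_notMem (fun hc => hyI hc.1) h).symm)
  rw [MeasureTheory.integral_indicator measurableSet_Ioo, D_integral] at hDCT
  refine hDCT.congr (fun ρ => ?_)
  rw [MeasureTheory.integral_indicator (Eset_measurable ρ)]

end Main

end HTaux

open HTaux in
/-- Hilbert transform of weighted Chebyshev polynomials of the first kind:
`ℋ[T_n(y)/√(1-y²)](x) = 0` for `n = 0` and `= U_{n-1}(x)` for `n ≥ 1`, as a Cauchy
principal value. -/
theorem hilbert_transform_weighted_chebyshevT (x : ℝ) (hx : x ∈ Set.Ioo (-1 : ℝ) 1) :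
    Tendsto (fun ρ : ℝ =>
        (1 / Real.pi) * ∫ y in {y : ℝ | y ∈ Set.Ioo (-1 : ℝ) 1 ∧ ρ < |y - x|},
          1 / (Real.sqrt (1 - y ^ 2) * (y - x)))
      (nhdsWithin 0 (Set.Ioi 0)) (nhds 0) ∧
    ∀ n : ℕ, 1 ≤ n →
      Tendsto (fun ρ : ℝ =>
          (1 / Real.pi) * ∫ y in {y : ℝ | y ∈ Set.Ioo (-1 : ℝ) 1 ∧ ρ < |y - x|},
            (Polynomial.Chebyshev.T ℝ n).eval y / (Real.sqrt (1 - y ^ 2) * (y - x)))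
        (nhdsWithin 0 (Set.Ioi 0))
        (nhds ((Polynomial.Chebyshev.U ℝ (n - 1)).eval x)) := by
  constructor
  · have h := (statement0_raw hx).const_mul (1 / Real.pi)
    rwa [mul_zero] at h
  · intro n hn
    set m : ℕ := n - 1 with hm
    have hnm : ((m : ℤ) + 1) = (n : ℤ) := by omega
    have key : ∀ ρ ∈ Ioi (0:ℝ),
        (∫ y in {y : ℝ | y ∈ Set.Ioo (-1:ℝ) 1 ∧ ρ < |y - x|},
            (Polynomial.Chebyshev.T ℝ n).eval y / (Real.sqrt (1 - y ^ 2) * (y - x)))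
          = (Polynomial.Chebyshev.T ℝ (n:ℤ)).eval x *
              (∫ y in {y : ℝ | y ∈ Set.Ioo (-1:ℝ) 1 ∧ ρ < |y - x|},
                1 / (Real.sqrt (1 - y ^ 2) * (y - x)))
            + ∫ y in {y : ℝ | y ∈ Set.Ioo (-1:ℝ) 1 ∧ ρ < |y - x|},
                (HTaux.D x m).eval y / Real.sqrt (1 - y ^ 2) := by
      intro ρ hρ
      have hρ' : (0:ℝ) < ρ := hρ
      have hint1 : IntegrableOn (fun y : ℝ => (Polynomial.Chebyshev.T ℝ (n:ℤ)).eval x *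
          (1 / (Real.sqrt (1 - y ^ 2) * (y - x))))
          {y : ℝ | y ∈ Set.Ioo (-1:ℝ) 1 ∧ ρ < |y - x|} :=
        (gfun_integrableOn_E hx hρ').const_mul _
      have hint2 : IntegrableOn (fun y : ℝ => (HTaux.D x m).eval y / Real.sqrt (1 - y ^ 2))
          {y : ℝ | y ∈ Set.Ioo (-1:ℝ) 1 ∧ ρ < |y - x|} :=
        (D_w_integrableOn x m).mono_set (fun y hy => hy.1)
      have hEqOn : EqOn
          (fun y : ℝ => (Polynomial.Chebyshev.T ℝ n).eval y /
            (Real.sqrt (1 - y ^ 2) * (y - x)))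
          (fun y : ℝ => (Polynomial.Chebyshev.T ℝ (n:ℤ)).eval x *
              (1 / (Real.sqrt (1 - y ^ 2) * (y - x)))
            + (HTaux.D x m).eval y / Real.sqrt (1 - y ^ 2))
          {y : ℝ | y ∈ Set.Ioo (-1:ℝ) 1 ∧ ρ < |y - x|} := by
        intro y hy
        have h0 : (0:ℝ) < 1 - y ^ 2 := by nlinarith [hy.1.1, hy.1.2]
        have hw : 0 < Real.sqrt (1 - y ^ 2) := Real.sqrt_pos.2 h0
        have hyx : y - x ≠ 0 := by
          intro hcon
          have := hy.2
          rw [hcon] at this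
          simp at this
          linarith
        have hk := d_key x m y
        rw [hnm] at hk
        have hτ : (Polynomial.Chebyshev.T ℝ (n:ℤ)).eval y
            = (Polynomial.Chebyshev.T ℝ (n:ℤ)).eval x + (y - x) * (HTaux.D x m).eval y := by
          linarith [hk]
        show (Polynomial.Chebyshev.T ℝ (n:ℤ)).eval y / (Real.sqrt (1 - y ^ 2) * (y - x)) = _
        rw [hτ]
        field_simp
      rw [MeasureTheory.setIntegral_congr_fun (Eset_measurable ρ) hEqOn,
        MeasureTheory.integral_add hint1 hint2, MeasureTheory.integral_const_mul]
    have hlim := (((statement0_raw hx).const_mul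
        ((Polynomial.Chebyshev.T ℝ (n:ℤ)).eval x)).add
        (h_part_tendsto (x := x) m)).const_mul (1 / Real.pi)
    have heq : (1 / Real.pi) * ((Polynomial.Chebyshev.T ℝ (n:ℤ)).eval x * 0
        + Real.pi * (Polynomial.Chebyshev.U ℝ (m:ℤ)).eval x)
        = (Polynomial.Chebyshev.U ℝ (m:ℤ)).eval x := by
      rw [mul_zero, zero_add, one_div, inv_mul_cancel_left₀ Real.pi_ne_zero]
    rw [heq, show ((m:ℤ)) = (n:ℤ) - 1 by omega] at hlim
    refine hlim.congr' ?_
    filter_upwards [self_mem_nhdsWithin] with ρ hρ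
    exact congrArg (fun z => (1 / Real.pi) * z) (key ρ hρ).symm
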